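/- For any probability measure Π on [0,1] and integers m > n ≥ 0, |V_m(Π) − V_n(Π)| ≤ ‖ω_Π‖_TV · Σ_{k=n}^{m−1} C(2k+1, k+1) 4^{−(k+1)}, and consequently |V_m(Π) − V_n(Π)| ≤ min{1, ‖ω_Π‖_TV (√m − √n)/√π}. -/

import Mathlib

open MeasureTheory
open Filter Topology
open scoped NNReal ENNReal


/-- Odd-budget majority accuracy: `P n q = ℙ(Bin(2n+1,q) ≥ n+1)`. -/
noncomputable def majP (n : ℕ) (q : ℝ) : ℝ :=
  ∑ j ∈ Finset.Icc (n+1) (2*n+1), ((2*n+1).choose j : ℝ) * q^j * (1-q)^(2*n+1-j)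

/-- Population voting curve. -/
noncomputable def voteV (μ : Measure ℝ) (n : ℕ) : ℝ := ∫ q, majP n q ∂μ

lemma aux_fin (μ : Measure ℝ) [IsFiniteMeasure μ] (g : ℝ → ℝ) (hg : ∀ q ∈ Set.Icc (0:ℝ) 1, g q ≤ 1) :
    IsFiniteMeasure ((μ.restrict (Set.Icc 0 1)).withDensity (fun q => ENNReal.ofReal (g q))) := by
  apply isFiniteMeasure_withDensity
  have h : ∫⁻ q, ENNReal.ofReal (g q) ∂(μ.restrict (Set.Icc 0 1)) ≤ ∫⁻ _, 1 ∂(μ.restrict (Set.Icc 0 1)) := by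
    refine setLIntegral_mono' measurableSet_Icc fun q hq => ?_
    simpa using ENNReal.ofReal_le_one.2 (hg q hq)
  refine ne_of_lt (lt_of_le_of_lt h ?_)
  simp [lintegral_one]

/-- Signed voting signature as a signed measure on ℝ (carried on [0,1/4]). -/
noncomputable def signature (μ : Measure ℝ) [IsFiniteMeasure μ] : SignedMeasure ℝ :=
  letI h1 := aux_fin μ (fun q => 2*q-1) (by intro q hq; simp only [Set.mem_Icc] at hq; linarith [hq.2])
  letI h2 := aux_fin μ (fun q => 1-2*q) (by intro q hq; simp only [Set.mem_Icc] at hq; linarith [hq.1])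
  (((μ.restrict (Set.Icc 0 1)).withDensity (fun q => ENNReal.ofReal (2*q-1))).map
      (fun q => q*(1-q))).toSignedMeasure
  - (((μ.restrict (Set.Icc 0 1)).withDensity (fun q => ENNReal.ofReal (1-2*q))).map
      (fun q => q*(1-q))).toSignedMeasure

/-- Integral of a real function against a signed measure, via the Jordan decomposition. -/
noncomputable def sInt {α : Type*} [MeasurableSpace α] (s : SignedMeasure α) (f : α → ℝ) : ℝ :=
  (∫ a, f a ∂s.toJordanDecomposition.posPart) - ∫ a, f a ∂s.toJordanDecomposition.negPart

/-- Limiting majority accuracy. -/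
noncomputable def voteVinf (μ : Measure ℝ) : ℝ :=
  (μ (Set.Ioc (1/2 : ℝ) 1)).toReal + (1/2) * (μ {(1/2 : ℝ)}).toReal

/-- Total-variation norm of the signed voting signature. -/
noncomputable def sigTV (μ : Measure ℝ) [IsFiniteMeasure μ] : ℝ :=
  ((signature μ).totalVariation Set.univ).toReal


lemma pascal2 (N j : ℕ) : (N+2).choose (j+2) = N.choose j + 2*N.choose (j+1) + N.choose (j+2) := by
  rw [Nat.choose_succ_succ, Nat.choose_succ_succ, Nat.choose_succ_succ]; ring


lemma majP_eq_range (n : ℕ) (q : ℝ) :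
    majP n q = ∑ i ∈ Finset.range (n+1), ((2*n+1).choose (n+1+i) : ℝ) * q^(n+1+i) * (1-q)^(n-i) := by
  unfold majP
  rw [← Finset.Ico_add_one_right_eq_Icc, Finset.sum_Ico_eq_sum_range]
  have h : 2*n+1+1 - (n+1) = n+1 := by omega
  rw [h]
  refine Finset.sum_congr rfl fun i hi => ?_
  have h2 : 2*n+1 - (n+1+i) = n - i := by omega
  rw [h2]


lemma majP_succ_sub (n : ℕ) (q : ℝ) :
    majP (n+1) q - majP n q = ((2*n+1).choose (n+1) : ℝ) * (q*(1-q))^(n+1) * (2*q-1) := by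
  have hsplit : majP (n+1) q =
      (∑ i ∈ Finset.range (n+2), ((2*n+1).choose (n+i) : ℝ) * q^(n+2+i) * (1-q)^(n+1-i))
      + 2 * (∑ i ∈ Finset.range (n+2), ((2*n+1).choose (n+1+i) : ℝ) * q^(n+2+i) * (1-q)^(n+1-i))
      + (∑ i ∈ Finset.range (n+2), ((2*n+1).choose (n+2+i) : ℝ) * q^(n+2+i) * (1-q)^(n+1-i)) := by
    rw [majP_eq_range]
    rw [Finset.mul_sum, ← Finset.sum_add_distrib, ← Finset.sum_add_distrib]
    refine Finset.sum_congr rfl fun i hi => ?_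
    have h1 : 2*(n+1)+1 = (2*n+1)+2 := by ring
    have h2 : (n+1)+1+i = (n+i)+2 := by ring
    rw [h1, h2, pascal2]
    have h3 : (n+i)+2 = n+2+i := by ring
    have h4 : (n+i)+1 = n+1+i := by ring
    push_cast
    rw [h3, h4]
    ring
  have hbase : majP n q =
      (∑ i ∈ Finset.range (n+1), ((2*n+1).choose (n+1+i) : ℝ) * q^(n+1+i) * (1-q)^(n-i+2))
      + 2 * (∑ i ∈ Finset.range (n+1), ((2*n+1).choose (n+1+i) : ℝ) * q^(n+2+i) * (1-q)^(n-i+1))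
      + (∑ i ∈ Finset.range (n+1), ((2*n+1).choose (n+1+i) : ℝ) * q^(n+3+i) * (1-q)^(n-i)) := by
    rw [majP_eq_range]
    rw [Finset.mul_sum, ← Finset.sum_add_distrib, ← Finset.sum_add_distrib]
    refine Finset.sum_congr rfl fun i hi => ?_
    simp only [Finset.mem_range] at hi
    have e1 : q^(n+2+i) = q^(n+1+i) * q := by ring
    have e2 : q^(n+3+i) = q^(n+1+i) * q^2 := by ring
    have e3 : (1-q)^(n-i+2) = (1-q)^(n-i) * (1-q)^2 := by ring
    have e4 : (1-q)^(n-i+1) = (1-q)^(n-i) * (1-q) := by ring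
    rw [e1, e2, e3, e4]
    ring
  have c1 : (∑ i ∈ Finset.range (n+2), ((2*n+1).choose (n+1+i) : ℝ) * q^(n+2+i) * (1-q)^(n+1-i))
      = ∑ i ∈ Finset.range (n+1), ((2*n+1).choose (n+1+i) : ℝ) * q^(n+2+i) * (1-q)^(n-i+1) := by
    rw [Finset.sum_range_succ]
    have hz : (2*n+1).choose (n+1+(n+1)) = 0 := Nat.choose_eq_zero_of_lt (by omega)
    rw [hz]
    simp only [Nat.cast_zero, zero_mul, add_zero]
    refine Finset.sum_congr rfl fun i hi => ?_
    simp only [Finset.mem_range] at hi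
    have : n+1-i = n-i+1 := by omega
    rw [this]
  have c2 : (∑ i ∈ Finset.range (n+2), ((2*n+1).choose (n+i) : ℝ) * q^(n+2+i) * (1-q)^(n+1-i))
      = ((2*n+1).choose n : ℝ) * q^(n+2) * (1-q)^(n+1)
        + ∑ i ∈ Finset.range (n+1), ((2*n+1).choose (n+1+i) : ℝ) * q^(n+3+i) * (1-q)^(n-i) := by
    rw [Finset.sum_range_succ']
    rw [add_comm]
    congr 1
    refine Finset.sum_congr rfl fun i hi => ?_
    have h1 : n+(i+1) = n+1+i := by omega
    have h2 : n+2+(i+1) = n+3+i := by omega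
    have h3 : n+1-(i+1) = n-i := by omega
    rw [h1, h2, h3]
  have c3 : (∑ i ∈ Finset.range (n+1), ((2*n+1).choose (n+1+i) : ℝ) * q^(n+1+i) * (1-q)^(n-i+2))
      = ((2*n+1).choose (n+1) : ℝ) * q^(n+1) * (1-q)^(n+2)
        + ∑ i ∈ Finset.range (n+2), ((2*n+1).choose (n+2+i) : ℝ) * q^(n+2+i) * (1-q)^(n+1-i) := by
    rw [Finset.sum_range_succ']
    rw [add_comm]
    congr 1
    · rw [Finset.sum_range_succ, Finset.sum_range_succ]
      have hz1 : (2*n+1).choose (n+2+n) = 0 := Nat.choose_eq_zero_of_lt (by omega)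
      have hz2 : (2*n+1).choose (n+2+(n+1)) = 0 := Nat.choose_eq_zero_of_lt (by omega)
      rw [hz1, hz2]
      simp only [Nat.cast_zero, zero_mul, add_zero]
      refine (Finset.sum_congr rfl fun i hi => ?_).symm
      simp only [Finset.mem_range] at hi
      have h1 : n+1+(i+1) = n+2+i := by omega
      have h2 : n+1+(i+1) = n+2+i := by omega
      have h3 : n-(i+1)+2 = n+1-i := by omega
      rw [h1, h3]
  have hsym : ((2*n+1).choose n : ℝ) = ((2*n+1).choose (n+1) : ℝ) := by
    norm_cast
    rw [← Nat.choose_symm (by omega : n+1 ≤ 2*n+1)]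
    congr 1
    omega
  rw [hsplit, hbase, c1, c2, c3, hsym, mul_pow]
  ring


noncomputable def aseq (n : ℕ) : ℝ := (Nat.centralBinom n : ℝ) * Real.sqrt n / 4^n

lemma aseq_eq (n : ℕ) (hn : 0 < n) :
    aseq n = Stirling.stirlingSeq (2*n) / (Stirling.stirlingSeq n)^2 := by
  have hx : (0:ℝ) < n := by exact_mod_cast hn
  have hE : (0:ℝ) < Real.exp 1 := Real.exp_pos 1
  have hfac : (Nat.centralBinom n : ℝ) * (n.factorial : ℝ) * (n.factorial : ℝ) = ((2*n).factorial : ℝ) := by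
    norm_cast
    rw [Nat.centralBinom]
    have h := Nat.choose_mul_factorial_mul_factorial (show n ≤ 2*n by omega)
    have h2 : 2*n - n = n := by omega
    rw [h2] at h
    exact h
  have hsq : Real.sqrt n * Real.sqrt n = (n:ℝ) := Real.mul_self_sqrt hx.le
  have h2 : Real.sqrt (2*(2*n:ℕ)) = 2 * Real.sqrt n := by
    push_cast
    rw [show (2:ℝ)*(2*n) = 2^2*n by ring, Real.sqrt_mul (by positivity), Real.sqrt_sq (by norm_num)]
  have h3 : (((2*n:ℕ):ℝ)/Real.exp 1)^(2*n) = 4^n * (((n:ℝ)/Real.exp 1)^n)^2 := by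
    push_cast
    rw [show (2*(n:ℝ))/Real.exp 1 = 2*((n:ℝ)/Real.exp 1) by ring, mul_pow, ← pow_mul,
      show (2:ℝ)^(2*n) = 4^n by rw [pow_mul]; norm_num]
    ring
  have hA : (0:ℝ) < ((n:ℝ)/Real.exp 1)^n := by positivity
  have hfn : (0:ℝ) < (n.factorial : ℝ) := by exact_mod_cast Nat.factorial_pos n
  have hsn : (0:ℝ) < Real.sqrt n := Real.sqrt_pos.2 hx
  have hs2n : Real.sqrt (2*(n:ℝ)) * Real.sqrt (2*(n:ℝ)) = 2*(n:ℝ) := Real.mul_self_sqrt (by positivity)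
  have hs2npos : (0:ℝ) < Real.sqrt (2*(n:ℝ)) := Real.sqrt_pos.2 (by positivity)
  unfold aseq Stirling.stirlingSeq
  rw [h2, h3]
  push_cast
  have hs2 : Real.sqrt 2 * Real.sqrt 2 = 2 := Real.mul_self_sqrt (by norm_num)
  field_simp
  linear_combination (2*Real.sqrt n*Real.sqrt n) * hfac
    + (2*((2*n).factorial:ℝ)) * hsq - ((2*n).factorial:ℝ) * hs2n

lemma aseq_mono : Monotone aseq := by
  refine monotone_nat_of_le_succ fun n => ?_
  rcases Nat.eq_zero_or_pos n with rfl | hn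
  · simp [aseq]
    positivity
  have hx : (0:ℝ) < n := by exact_mod_cast hn
  have hCB : ((n+1) : ℝ) * (Nat.centralBinom (n+1) : ℝ) = 2 * (2*n+1) * (Nat.centralBinom n : ℝ) := by
    exact_mod_cast congrArg (Nat.cast : ℕ → ℝ) (Nat.succ_mul_centralBinom_succ n)
  have key : 2*((n:ℝ)+1) * Real.sqrt n ≤ (2*n+1) * Real.sqrt (n+1) := by
    have h1 : 2*((n:ℝ)+1) * Real.sqrt n = Real.sqrt ((2*(n+1))^2 * n) := by
      rw [Real.sqrt_mul (by positivity), Real.sqrt_sq (by positivity)]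
    have h2 : (2*(n:ℝ)+1) * Real.sqrt (n+1) = Real.sqrt ((2*n+1)^2 * (n+1)) := by
      rw [Real.sqrt_mul (by positivity), Real.sqrt_sq (by positivity)]
    rw [h1, h2]
    apply Real.sqrt_le_sqrt
    nlinarith
  -- aseq n ≤ aseq (n+1)
  unfold aseq
  rw [div_le_div_iff₀ (by positivity) (by positivity)]
  have hpos : (0:ℝ) < ((n:ℝ)+1) := by positivity
  rw [show (4:ℝ)^(n+1) = 4^n * 4 by ring]
  have hCBpos : (0:ℝ) < (Nat.centralBinom n : ℝ) := by exact_mod_cast Nat.centralBinom_pos n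
  -- reduce to key
  have : (Nat.centralBinom n : ℝ) * Real.sqrt n * 4 * ((n:ℝ)+1) ≤ (Nat.centralBinom (n+1) : ℝ) * Real.sqrt (n+1) * ((n:ℝ)+1) := by
    calc (Nat.centralBinom n : ℝ) * Real.sqrt n * 4 * ((n:ℝ)+1)
        = (Nat.centralBinom n : ℝ) * 2 * (2*((n:ℝ)+1) * Real.sqrt n) := by ring
      _ ≤ (Nat.centralBinom n : ℝ) * 2 * ((2*n+1) * Real.sqrt (n+1)) := by
          apply mul_le_mul_of_nonneg_left key (by positivity)
      _ = (2 * (2*(n:ℝ)+1) * (Nat.centralBinom n : ℝ)) * Real.sqrt (n+1) := by ring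
      _ = ((n:ℝ)+1) * (Nat.centralBinom (n+1) : ℝ) * Real.sqrt (n+1) := by
          linear_combination (-Real.sqrt ((n:ℝ)+1)) * hCB
      _ = (Nat.centralBinom (n+1) : ℝ) * Real.sqrt (n+1) * ((n:ℝ)+1) := by ring
  have h5 : (Nat.centralBinom n : ℝ) * Real.sqrt n * 4 ≤ (Nat.centralBinom (n+1) : ℝ) * Real.sqrt (n+1) :=
    le_of_mul_le_mul_right (by linarith) hpos
  have h6 : (0:ℝ) ≤ (4:ℝ)^n := by positivity
  push_cast
  nlinarith [mul_le_mul_of_nonneg_right h5 h6]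

lemma aseq_tendsto : Tendsto aseq atTop (𝓝 (1 / Real.sqrt Real.pi)) := by
  have hpi : (0:ℝ) < Real.sqrt Real.pi := Real.sqrt_pos.2 Real.pi_pos
  have h1 : Tendsto (fun n => Stirling.stirlingSeq (2*n)) atTop (𝓝 (Real.sqrt Real.pi)) :=
    Stirling.tendsto_stirlingSeq_sqrt_pi.comp (tendsto_atTop_atTop_of_monotone
      (fun a b h => by omega) (fun b => ⟨b, by omega⟩))
  have h2 : Tendsto (fun n => (Stirling.stirlingSeq n)^2) atTop (𝓝 ((Real.sqrt Real.pi)^2)) :=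
    Stirling.tendsto_stirlingSeq_sqrt_pi.pow 2
  have h3 := h1.div h2 (by positivity)
  have heq : (Real.sqrt Real.pi) / (Real.sqrt Real.pi)^2 = 1 / Real.sqrt Real.pi := by
    rw [sq]
    field_simp
  rw [heq] at h3
  apply h3.congr'
  filter_upwards [eventually_ge_atTop 1] with n hn
  exact (aseq_eq n hn).symm

lemma aseq_le (n : ℕ) : aseq n ≤ 1 / Real.sqrt Real.pi :=
  aseq_mono.ge_of_tendsto aseq_tendsto n

lemma term_bound (k : ℕ) :
    ((2*k+1).choose (k+1) : ℝ) * (1/4)^(k+1) ≤ (Real.sqrt (k+1) - Real.sqrt k) / Real.sqrt Real.pi := by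
  have hc : 2 * ((2*k+1).choose (k+1)) = Nat.centralBinom (k+1) := by
    have h2 : (2*k+1).choose k = (2*k+1).choose (k+1) := by
      rw [← Nat.choose_symm (show k+1 ≤ 2*k+1 by omega)]
      congr 1
      omega
    have h3 : (2*k+1+1).choose (k+1) = (2*k+1).choose k + (2*k+1).choose (k+1) := by
      simpa using Nat.choose_succ_succ (2*k+1) k
    have h4 : Nat.centralBinom (k+1) = (2*k+1+1).choose (k+1) := by
      rw [Nat.centralBinom, show 2*(k+1) = 2*k+1+1 by omega]
    omega
  have hpi : (0:ℝ) < Real.sqrt Real.pi := Real.sqrt_pos.2 Real.pi_pos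
  have hsk1 : (0:ℝ) < Real.sqrt (k+1) := Real.sqrt_pos.2 (by positivity)
  have hsq1 : Real.sqrt (k+1) * Real.sqrt (k+1) = (k:ℝ)+1 := by
    rw [Real.mul_self_sqrt (by positivity)]
  have hsqk : Real.sqrt k * Real.sqrt k = (k:ℝ) := Real.mul_self_sqrt (by positivity)
  have hstep : 1 / (2 * Real.sqrt (k+1)) ≤ Real.sqrt (k+1) - Real.sqrt k := by
    rw [div_le_iff₀ (by positivity)]
    nlinarith [sq_nonneg (Real.sqrt (k+1) - Real.sqrt k), Real.sqrt_nonneg (k:ℝ), hsq1, hsqk]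
  have ha := aseq_le (k+1)
  unfold aseq at ha
  have hchoose : ((2*k+1).choose (k+1) : ℝ) = (Nat.centralBinom (k+1) : ℝ) / 2 := by
    rw [eq_div_iff (by norm_num : (2:ℝ) ≠ 0)]
    exact_mod_cast (mul_comm 2 ((2*k+1).choose (k+1)) ▸ hc)
  rw [hchoose]
  have h4 : (1/4:ℝ)^(k+1) = 1/(4:ℝ)^(k+1) := by rw [div_pow]; norm_num
  rw [h4]
  calc (Nat.centralBinom (k+1) : ℝ) / 2 * (1/(4:ℝ)^(k+1))
      = ((Nat.centralBinom (k+1) : ℝ) * Real.sqrt ((k:ℝ)+1) / 4^(k+1)) * (1/(2*Real.sqrt (k+1))) := by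
        field_simp
    _ ≤ (1/Real.sqrt Real.pi) * (Real.sqrt (k+1) - Real.sqrt k) := by
        apply mul_le_mul ?_ hstep (by positivity) (by positivity)
        · have : ((k:ℝ)+1) = ((k+1:ℕ):ℝ) := by push_cast; ring
          rw [this]
          exact ha
    _ = (Real.sqrt (k+1) - Real.sqrt k) / Real.sqrt Real.pi := by ring


lemma majP_cont (n : ℕ) : Continuous (majP n) := by
  unfold majP
  fun_prop


lemma step_bound (μ : Measure ℝ) [IsProbabilityMeasure μ] (hμ : μ (Set.Icc (0:ℝ) 1)ᶜ = 0) (k : ℕ) :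
    |voteV μ (k+1) - voteV μ k| ≤ sigTV μ * (((2*k+1).choose (k+1) : ℝ) * (1/4)^(k+1)) := by
  classical
  set ν := μ.restrict (Set.Icc 0 1) with hν
  haveI hfA : IsFiniteMeasure (ν.withDensity (fun q => ENNReal.ofReal (2*q-1))) :=
    aux_fin μ (fun q => 2*q-1) (by intro q hq; simp only [Set.mem_Icc] at hq; linarith [hq.2])
  haveI hfB : IsFiniteMeasure (ν.withDensity (fun q => ENNReal.ofReal (1-2*q))) :=
    aux_fin μ (fun q => 1-2*q) (by intro q hq; simp only [Set.mem_Icc] at hq; linarith [hq.1])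
  have hφ : Measurable (fun q : ℝ => q*(1-q)) := by fun_prop
  set A := (ν.withDensity (fun q => ENNReal.ofReal (2*q-1))).map (fun q => q*(1-q)) with hA
  set B := (ν.withDensity (fun q => ENNReal.ofReal (1-2*q))).map (fun q => q*(1-q)) with hB
  haveI : IsFiniteMeasure A := Measure.isFiniteMeasure_map _ _
  haveI : IsFiniteMeasure B := Measure.isFiniteMeasure_map _ _
  set C : ℝ := ((2*k+1).choose (k+1) : ℝ) with hC
  have hCpos : (0:ℝ) ≤ C := Nat.cast_nonneg _
  set f : ℝ → ℝ := fun t => t^(k+1) with hf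
  set g : ℝ → ℝ := fun q => (q*(1-q))^(k+1) with hg
  have hfc : Continuous f := by fun_prop
  have hgc : Continuous g := by fun_prop
  have hνμ : ν = μ := by
    refine Measure.restrict_eq_self_of_ae_mem ?_
    rw [ae_iff]
    exact hμ
  have hInt : ∀ j, Integrable (majP j) ν := fun j => (majP_cont j).integrableOn_Icc
  have h1 : voteV μ (k+1) - voteV μ k = ∫ q, (majP (k+1) q - majP k q) ∂ν := by
    unfold voteV
    rw [← hνμ, integral_sub (hInt (k+1)) (hInt k)]
  have h2 : ∫ q, (majP (k+1) q - majP k q) ∂ν = C * ∫ q, g q * (2*q-1) ∂ν := by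
    rw [← integral_const_mul]
    refine integral_congr_ae (Eventually.of_forall fun q => ?_)
    show majP (k+1) q - majP k q = C * (g q * (2*q-1))
    rw [majP_succ_sub, hC, hg]
    ring
  have hsub : ∀ q : ℝ, g q * (2*q-1) = g q * max (2*q-1) 0 - g q * max (1-2*q) 0 := by
    intro q
    rcases le_total 0 (2*q-1) with h | h
    · rw [max_eq_left h, max_eq_right (by linarith : 1-2*q ≤ 0)]; ring
    · rw [max_eq_right h, max_eq_left (by linarith : 0 ≤ 1-2*q)]; ring
  have hcpos : Continuous (fun q : ℝ => g q * max (2*q-1) 0) :=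
    hgc.mul (((continuous_const.mul continuous_id).sub continuous_const).max continuous_const)
  have hcneg : Continuous (fun q : ℝ => g q * max (1-2*q) 0) :=
    hgc.mul ((continuous_const.sub (continuous_const.mul continuous_id)).max continuous_const)
  have hIpos : Integrable (fun q => g q * max (2*q-1) 0) ν := hcpos.integrableOn_Icc
  have hIneg : Integrable (fun q => g q * max (1-2*q) 0) ν := hcneg.integrableOn_Icc
  have h3 : ∫ q, g q * (2*q-1) ∂ν =
      (∫ q, g q * max (2*q-1) 0 ∂ν) - ∫ q, g q * max (1-2*q) 0 ∂ν := by
    rw [← integral_sub hIpos hIneg]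
    exact integral_congr_ae (Eventually.of_forall hsub)
  have h4A : ∫ t, f t ∂A = ∫ q, g q * max (2*q-1) 0 ∂ν := by
    rw [hA, integral_map hφ.aemeasurable (hfc.aestronglyMeasurable)]
    have hdens : (fun q : ℝ => ENNReal.ofReal (2*q-1)) = fun q : ℝ => ((Real.toNNReal (2*q-1) : ℝ≥0) : ℝ≥0∞) := rfl
    rw [hdens, integral_withDensity_eq_integral_smul
      (by fun_prop : Measurable fun q : ℝ => Real.toNNReal (2*q-1))]
    refine integral_congr_ae (Eventually.of_forall fun q => ?_)
    simp [NNReal.smul_def, Real.coe_toNNReal', hg, hf]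
    ring
  have h4B : ∫ t, f t ∂B = ∫ q, g q * max (1-2*q) 0 ∂ν := by
    rw [hB, integral_map hφ.aemeasurable (hfc.aestronglyMeasurable)]
    have hdens : (fun q : ℝ => ENNReal.ofReal (1-2*q)) = fun q : ℝ => ((Real.toNNReal (1-2*q) : ℝ≥0) : ℝ≥0∞) := rfl
    rw [hdens, integral_withDensity_eq_integral_smul
      (by fun_prop : Measurable fun q : ℝ => Real.toNNReal (1-2*q))]
    refine integral_congr_ae (Eventually.of_forall fun q => ?_)
    simp [NNReal.smul_def, Real.coe_toNNReal', hg, hf]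
    ring
  have key : voteV μ (k+1) - voteV μ k = C * ((∫ t, f t ∂A) - ∫ t, f t ∂B) := by
    rw [h1, h2, h3, h4A, h4B]
  -- Jordan decomposition
  set s : SignedMeasure ℝ := signature μ with hs
  set p : Measure ℝ := s.toJordanDecomposition.posPart with hp
  set nn : Measure ℝ := s.toJordanDecomposition.negPart with hnn
  have hjd : p.toSignedMeasure - nn.toSignedMeasure = A.toSignedMeasure - B.toSignedMeasure := by
    exact s.toSignedMeasure_toJordanDecomposition
  have hmeq : p + B = A + nn := by
    have h5 : p.toSignedMeasure + B.toSignedMeasure = A.toSignedMeasure + nn.toSignedMeasure := by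
      rw [sub_eq_sub_iff_add_eq_add] at hjd
      exact hjd
    rw [← Measure.toSignedMeasure_add, ← Measure.toSignedMeasure_add] at h5
    exact Measure.toSignedMeasure_eq_toSignedMeasure_iff.1 h5
  -- supports
  set K : Set ℝ := Set.Icc 0 (1/4) with hK
  have hKm : MeasurableSet Kᶜ := measurableSet_Icc.compl
  have hpre : ν ((fun q : ℝ => q*(1-q)) ⁻¹' Kᶜ) = 0 := by
    rw [hν, Measure.restrict_apply (hφ hKm)]
    convert measure_empty (μ := μ)
    rw [Set.eq_empty_iff_forall_notMem]
    rintro q ⟨hq1, hq2⟩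
    simp only [Set.mem_Icc] at hq2
    refine hq1 ?_
    simp only [hK, Set.mem_Icc]
    constructor
    · nlinarith [hq2.1, hq2.2]
    · nlinarith [sq_nonneg (q - 1/2)]
  have hA0 : A Kᶜ = 0 := by
    rw [hA, Measure.map_apply hφ hKm]
    exact (withDensity_absolutelyContinuous ν _) hpre
  have hB0 : B Kᶜ = 0 := by
    rw [hB, Measure.map_apply hφ hKm]
    exact (withDensity_absolutelyContinuous ν _) hpre
  have hpn : ∀ E : Set ℝ, E ⊆ Kᶜ → MeasurableSet E → p E = nn E := by
    intro E hE hEm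
    have h6 : (p + B) E = (A + nn) E := by rw [hmeq]
    rw [Measure.add_apply, Measure.add_apply] at h6
    rw [measure_mono_null hE hA0, measure_mono_null hE hB0, add_zero, zero_add] at h6
    exact h6
  obtain ⟨u, hum, hpu, hnu⟩ := s.toJordanDecomposition.mutuallySingular
  have hp0 : p Kᶜ = 0 := by
    have h7 : p (Kᶜ ∩ u) = 0 := measure_mono_null Set.inter_subset_right hpu
    have h8 : p (Kᶜ ∩ uᶜ) = 0 := by
      rw [hpn _ Set.inter_subset_left (hKm.inter hum.compl)]
      exact measure_mono_null Set.inter_subset_right hnu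
    have := measure_union_le (μ := p) (Kᶜ ∩ u) (Kᶜ ∩ uᶜ)
    rw [Set.inter_union_compl, h7, h8, add_zero] at this
    exact le_antisymm this zero_le
  have hn0 : nn Kᶜ = 0 := by
    have h7 : nn (Kᶜ ∩ uᶜ) = 0 := measure_mono_null Set.inter_subset_right hnu
    have h8 : nn (Kᶜ ∩ u) = 0 := by
      rw [← hpn _ Set.inter_subset_left (hKm.inter hum)]
      exact measure_mono_null Set.inter_subset_right hpu
    have := measure_union_le (μ := nn) (Kᶜ ∩ u) (Kᶜ ∩ uᶜ)
    rw [Set.inter_union_compl, h7, h8, add_zero] at this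
    exact le_antisymm this zero_le
  -- integrability and bounds
  have hbnd : ∀ (m : Measure ℝ) [IsFiniteMeasure m], m Kᶜ = 0 →
      Integrable f m ∧ |∫ t, f t ∂m| ≤ (1/4)^(k+1) * (m Set.univ).toReal := by
    intro m _ hm0
    have hae : ∀ᵐ t ∂m, t ∈ K := by
      rw [ae_iff]
      exact hm0
    have haebound : ∀ᵐ t ∂m, ‖f t‖ ≤ (1/4)^(k+1) := by
      filter_upwards [hae] with t ht
      simp only [hK, Set.mem_Icc] at ht
      rw [hf]
      simp only [Real.norm_eq_abs, abs_pow]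
      refine pow_le_pow_left₀ (abs_nonneg t) ?_ (k+1)
      rw [abs_le]
      exact ⟨by linarith [ht.1], ht.2⟩
    refine ⟨Integrable.mono' (integrable_const ((1/4:ℝ)^(k+1))) hfc.aestronglyMeasurable haebound, ?_⟩
    have := norm_integral_le_of_norm_le_const haebound (f := f)
    rwa [Real.norm_eq_abs] at this
  obtain ⟨hIA, hbA⟩ := hbnd A hA0
  obtain ⟨hIB, hbB⟩ := hbnd B hB0
  obtain ⟨hIp, hbp⟩ := hbnd p hp0
  obtain ⟨hIn, hbn⟩ := hbnd nn hn0
  have hint : (∫ t, f t ∂p) + ∫ t, f t ∂B = (∫ t, f t ∂A) + ∫ t, f t ∂nn := by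
    rw [← integral_add_measure hIp hIB, ← integral_add_measure hIA hIn, hmeq]
  have hTV : sigTV μ = (p Set.univ).toReal + (nn Set.univ).toReal := by
    unfold sigTV
    rw [show signature μ = s from rfl]
    rw [SignedMeasure.totalVariation, Measure.add_apply, ENNReal.toReal_add
      (measure_ne_top _ _) (measure_ne_top _ _)]
  have hdiff : (∫ t, f t ∂A) - ∫ t, f t ∂B = (∫ t, f t ∂p) - ∫ t, f t ∂nn := by linarith
  rw [key, hdiff, abs_mul, abs_of_nonneg hCpos]
  have habs : |(∫ t, f t ∂p) - ∫ t, f t ∂nn| ≤ (1/4)^(k+1) * sigTV μ := by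
    rw [hTV]
    calc |(∫ t, f t ∂p) - ∫ t, f t ∂nn| ≤ |∫ t, f t ∂p| + |∫ t, f t ∂nn| := abs_sub _ _
      _ ≤ (1/4)^(k+1) * (p Set.univ).toReal + (1/4)^(k+1) * (nn Set.univ).toReal := add_le_add hbp hbn
      _ = (1/4)^(k+1) * ((p Set.univ).toReal + (nn Set.univ).toReal) := by ring
  calc C * |(∫ t, f t ∂p) - ∫ t, f t ∂nn| ≤ C * ((1/4)^(k+1) * sigTV μ) :=
        mul_le_mul_of_nonneg_left habs hCpos
    _ = sigTV μ * (C * (1/4)^(k+1)) := by ring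


lemma majP_nonneg (n : ℕ) {q : ℝ} (h0 : 0 ≤ q) (h1 : q ≤ 1) : 0 ≤ majP n q := by
  refine Finset.sum_nonneg fun j hj => ?_
  have : (0:ℝ) ≤ 1 - q := by linarith
  positivity


lemma majP_le_one (n : ℕ) {q : ℝ} (h0 : 0 ≤ q) (h1 : q ≤ 1) : majP n q ≤ 1 := by
  have h1q : (0:ℝ) ≤ 1 - q := by linarith
  have hfull : ∑ j ∈ Finset.range (2*n+1+1), ((2*n+1).choose j : ℝ) * q^j * (1-q)^(2*n+1-j) = 1 := by
    have h := add_pow q (1-q) (2*n+1)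
    rw [show q + (1-q) = 1 by ring, one_pow] at h
    exact (Finset.sum_congr rfl fun j hj => by ring).trans h.symm
  rw [← hfull]
  unfold majP
  refine Finset.sum_le_sum_of_subset_of_nonneg ?_ fun j hj _ => ?_
  · intro j hj
    simp only [Finset.mem_Icc] at hj
    simp only [Finset.mem_range]
    omega
  · positivity


lemma voteV_mem (μ : Measure ℝ) [IsProbabilityMeasure μ] (hμ : μ (Set.Icc (0:ℝ) 1)ᶜ = 0) (j : ℕ) :
    0 ≤ voteV μ j ∧ voteV μ j ≤ 1 := by
  set ν := μ.restrict (Set.Icc 0 1) with hν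
  have hνμ : ν = μ := by
    refine Measure.restrict_eq_self_of_ae_mem ?_
    rw [ae_iff]
    exact hμ
  have hae : ∀ᵐ q ∂ν, q ∈ Set.Icc (0:ℝ) 1 := ae_restrict_mem measurableSet_Icc
  have hInt : Integrable (majP j) ν := (majP_cont j).integrableOn_Icc
  have hV : voteV μ j = ∫ q, majP j q ∂ν := by rw [hνμ]; rfl
  constructor
  · rw [hV]
    refine integral_nonneg_of_ae ?_
    filter_upwards [hae] with q hq
    exact majP_nonneg j hq.1 hq.2
  · rw [hV]
    have hle : ∫ q, majP j q ∂ν ≤ ∫ _, (1:ℝ) ∂ν := by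
      refine integral_mono_ae hInt (integrable_const 1) ?_
      filter_upwards [hae] with q hq
      exact majP_le_one j hq.1 hq.2
    refine hle.trans ?_
    rw [integral_const, smul_eq_mul, mul_one]
    have : ν Set.univ ≤ 1 := by
      rw [hνμ]
      exact prob_le_one
    exact ENNReal.toReal_le_of_le_ofReal (by norm_num) (by simpa using this)


/-- Distribution-free budget-to-budget variation bound for the voting curve. -/
theorem stmt9 (μ : Measure ℝ) [IsProbabilityMeasure μ] (hμ : μ (Set.Icc (0:ℝ) 1)ᶜ = 0)
    (m n : ℕ) (hmn : n < m) :
    |voteV μ m - voteV μ n| ≤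
      sigTV μ * ∑ k ∈ Finset.Ico n m, ((2*k+1).choose (k+1) : ℝ) * (1/4)^(k+1) ∧
    |voteV μ m - voteV μ n| ≤
      min 1 (sigTV μ * (Real.sqrt m - Real.sqrt n) / Real.sqrt Real.pi) := by
  have hsig0 : 0 ≤ sigTV μ := ENNReal.toReal_nonneg
  have tel : voteV μ m - voteV μ n = ∑ k ∈ Finset.Ico n m, (voteV μ (k+1) - voteV μ k) := by
    rw [Finset.sum_Ico_eq_sub _ hmn.le, Finset.sum_range_sub (fun i => voteV μ i),
      Finset.sum_range_sub (fun i => voteV μ i)]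
    ring
  have part1 : |voteV μ m - voteV μ n| ≤
      sigTV μ * ∑ k ∈ Finset.Ico n m, ((2*k+1).choose (k+1) : ℝ) * (1/4)^(k+1) := by
    rw [tel, Finset.mul_sum]
    exact (Finset.abs_sum_le_sum_abs _ _).trans (Finset.sum_le_sum fun k _ => step_bound μ hμ k)
  have sqrt_tel : ∑ k ∈ Finset.Ico n m, (Real.sqrt ((k:ℝ)+1) - Real.sqrt k)
      = Real.sqrt m - Real.sqrt n := by
    have hcongr : ∀ k ∈ Finset.Ico n m, Real.sqrt ((k:ℝ)+1) - Real.sqrt k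
        = (fun i : ℕ => Real.sqrt i) (k+1) - (fun i : ℕ => Real.sqrt i) k := by
      intro k _
      push_cast
      ring_nf
    rw [Finset.sum_congr rfl hcongr, Finset.sum_Ico_eq_sub _ hmn.le,
      Finset.sum_range_sub (fun i : ℕ => Real.sqrt i), Finset.sum_range_sub (fun i : ℕ => Real.sqrt i)]
    ring
  have part2a : ∑ k ∈ Finset.Ico n m, ((2*k+1).choose (k+1) : ℝ) * (1/4)^(k+1)
      ≤ (Real.sqrt m - Real.sqrt n) / Real.sqrt Real.pi := by
    calc ∑ k ∈ Finset.Ico n m, ((2*k+1).choose (k+1) : ℝ) * (1/4)^(k+1)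
        ≤ ∑ k ∈ Finset.Ico n m, (Real.sqrt ((k:ℝ)+1) - Real.sqrt k) / Real.sqrt Real.pi :=
          Finset.sum_le_sum fun k _ => term_bound k
      _ = (∑ k ∈ Finset.Ico n m, (Real.sqrt ((k:ℝ)+1) - Real.sqrt k)) / Real.sqrt Real.pi := by
          rw [Finset.sum_div]
      _ = (Real.sqrt m - Real.sqrt n) / Real.sqrt Real.pi := by rw [sqrt_tel]
  have part2 : |voteV μ m - voteV μ n| ≤ sigTV μ * (Real.sqrt m - Real.sqrt n) / Real.sqrt Real.pi := by
    rw [mul_div_assoc]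
    exact part1.trans (mul_le_mul_of_nonneg_left part2a hsig0)
  have bound1 : |voteV μ m - voteV μ n| ≤ 1 := by
    obtain ⟨h1, h2⟩ := voteV_mem μ hμ m
    obtain ⟨h3, h4⟩ := voteV_mem μ hμ n
    rw [abs_le]
    constructor <;> linarith
  exact ⟨part1, le_min bound1 part2⟩
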